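/- There exists a constant C > 0 such that u_λ(x) ≥ −C for every λ > 0 and every x ∈ ℝ^N; i.e., the maximal subsolutions u_λ are bounded from below uniformly in λ. -/

import Mathlib

open MeasureTheory Set
open scoped RealInnerProductSpace
open Metric

noncomputable section

abbrev Euc (N : ℕ) := EuclideanSpace ℝ (Fin N)

/-- `u` is an (a.e.) subsolution of `H = a` in `ℝ^N`. -/
def IsSubsol {N : ℕ} (H : Euc N × Euc N → ℝ) (a : ℝ) (u : Euc N → ℝ) : Prop :=
  LocallyLipschitz u ∧
    ∀ᵐ x : Euc N ∂volume, DifferentiableAt ℝ u x → H (x, gradient u x) ≤ a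

/-- `u` is an (a.e.) subsolution of the discounted equation `λ u + H(x,Du) = 0`. -/
def IsDiscSubsol {N : ℕ} (H : Euc N × Euc N → ℝ) (lam : ℝ) (u : Euc N → ℝ) : Prop :=
  LocallyLipschitz u ∧
    ∀ᵐ x : Euc N ∂volume, DifferentiableAt ℝ u x →
      lam * u x + H (x, gradient u x) ≤ 0

/-- The Lagrangian associated with `H` via the Fenchel transform. -/
def Lag {N : ℕ} (H : Euc N × Euc N → ℝ) : Euc N × Euc N → ℝ :=
  fun z => sSup (Set.range fun p : Euc N => ⟪p, z.2⟫ - H (z.1, p))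

/-- `u` is a subsolution for the generalized Lagrangian `Φ`. -/
def SubsolFor {N : ℕ} (Φ : Euc N × Euc N → ℝ) (u : Euc N → ℝ) : Prop :=
  LocallyLipschitz u ∧
    ∀ᵐ x : Euc N ∂volume, DifferentiableAt ℝ u x →
      ∀ q : Euc N, fderiv ℝ u x q ≤ Φ (x, q)

/-- `u` is a `λ`-discounted subsolution for the generalized Lagrangian `Φ`. -/
def DiscSubsolFor {N : ℕ} (lam : ℝ) (Φ : Euc N × Euc N → ℝ) (u : Euc N → ℝ) : Prop :=
  LocallyLipschitz u ∧
    ∀ᵐ x : Euc N ∂volume, DifferentiableAt ℝ u x →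
      ∀ q : Euc N, lam * u x + fderiv ℝ u x q ≤ Φ (x, q)

/-- A Mather measure for the ergodic problem. -/
def MatherMeasure {N : ℕ} (H : Euc N × Euc N → ℝ) (μ : Measure (Euc N × Euc N)) : Prop :=
  IsProbabilityMeasure μ ∧ Integrable (Lag H) μ ∧ (∫ z, Lag H z ∂μ) = 0 ∧
    ∀ Φ : Euc N × Euc N → ℝ, Continuous Φ → BddBelow (Set.range Φ) →
      (∃ u, SubsolFor Φ u) → (Integrable Φ μ → 0 ≤ ∫ z, Φ z ∂μ)

/-- A `(λ,z)`-Mather measure (relative to the maximal discounted solution `um`). -/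
def DiscMatherMeasure {N : ℕ} (H : Euc N × Euc N → ℝ) (lam : ℝ) (z : Euc N)
    (um : Euc N → ℝ) (μ : Measure (Euc N × Euc N)) : Prop :=
  IsProbabilityMeasure μ ∧ Integrable (Lag H) μ ∧ (∫ w, Lag H w ∂μ) = lam * um z ∧
    ∀ Φ : Euc N × Euc N → ℝ, Continuous Φ → BddBelow (Set.range Φ) →
      ∀ u : Euc N → ℝ, DiscSubsolFor lam Φ u →
        (Integrable Φ μ → lam * u z ≤ ∫ w, Φ w ∂μ)

/-- A locally Lipschitz function is Lipschitz on every compact set. -/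
lemma loclip_lipschitzOnWith {N : ℕ} {f : Euc N → ℝ} (hf : LocallyLipschitz f)
    {K : Set (Euc N)} (hK : IsCompact K) : ∃ L : NNReal, LipschitzOnWith L f K := by
  classical
  have hcont : Continuous f := hf.continuous
  choose Kc t ht hlip using hf
  have hball : ∀ x : Euc N, ∃ ρ : ℝ, 0 < ρ ∧ ball x (2 * ρ) ⊆ t x := by
    intro x
    rcases Metric.mem_nhds_iff.1 (ht x) with ⟨ε, εpos, hε⟩
    exact ⟨ε / 2, by linarith, by rw [show 2 * (ε / 2) = ε by ring]; exact hε⟩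
  choose ρ ρpos hρ using hball
  obtain ⟨s, hsK, hcover⟩ := hK.elim_nhds_subcover (fun x => ball x (ρ x))
    (fun x _ => ball_mem_nhds x (ρpos x))
  rcases s.eq_empty_or_nonempty with hs | hs
  · refine ⟨1, fun x hx y hy => ?_⟩
    exfalso
    have := hcover hx
    simp [hs] at this
  obtain ⟨B0, hB0⟩ := hK.exists_bound_of_continuousOn hcont.continuousOn
  set B : ℝ := max B0 0 with hB
  have hBnn : 0 ≤ B := le_max_right _ _
  have hKB : ∀ x ∈ K, |f x| ≤ B := fun x hx => le_trans (by simpa [Real.norm_eq_abs] using hB0 x hx) (le_max_left _ _)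
  set η : ℝ := s.inf' hs ρ with hη
  have hηpos : 0 < η := by
    rw [hη, Finset.lt_inf'_iff]
    exact fun i _ => ρpos i
  set M : ℝ := s.sup' hs (fun i => (Kc i : ℝ)) with hM
  have hMnn : 0 ≤ M := by
    obtain ⟨i, hi⟩ := hs
    exact le_trans (Kc i).coe_nonneg (Finset.le_sup' (fun j => (Kc j : ℝ)) hi)
  set Lr : ℝ := max M ((2 * B + 1) / η) with hLr
  have hLrnn : 0 ≤ Lr := le_trans hMnn (le_max_left _ _)
  refine ⟨Real.toNNReal Lr, lipschitzOnWith_iff_dist_le_mul.2 fun x hx y hy => ?_⟩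
  rw [Real.coe_toNNReal _ hLrnn]
  rcases lt_or_ge (dist x y) η with hd | hd
  · have hxcov := hcover hx
    simp only [Finset.mem_coe, Set.mem_iUnion] at hxcov
    obtain ⟨i, his, hxi⟩ := hxcov
    have hηi : η ≤ ρ i := Finset.inf'_le _ his
    have hxti : x ∈ t i := hρ i (by
      rw [mem_ball] at hxi ⊢
      calc dist x i < ρ i := hxi
        _ ≤ 2 * ρ i := by linarith [ρpos i])
    have hyti : y ∈ t i := hρ i (by
      rw [mem_ball] at hxi ⊢
      calc dist y i ≤ dist y x + dist x i := dist_triangle _ _ _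
        _ < η + ρ i := by rw [dist_comm]; exact add_lt_add hd hxi
        _ ≤ 2 * ρ i := by linarith)
    calc dist (f x) (f y) ≤ (Kc i : ℝ) * dist x y := (hlip i).dist_le_mul x hxti y hyti
      _ ≤ Lr * dist x y := by
          apply mul_le_mul_of_nonneg_right _ dist_nonneg
          exact le_trans (Finset.le_sup' (fun j => (Kc j : ℝ)) his) (le_max_left _ _)
  · have h1 : dist (f x) (f y) ≤ 2 * B + 1 := by
      rw [Real.dist_eq]
      calc |f x - f y| ≤ |f x| + |f y| := abs_sub _ _
        _ ≤ B + B := add_le_add (hKB x hx) (hKB y hy)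
        _ ≤ 2 * B + 1 := by linarith
    calc dist (f x) (f y) ≤ 2 * B + 1 := h1
      _ = ((2 * B + 1) / η) * η := by field_simp
      _ ≤ ((2 * B + 1) / η) * dist x y := by
          apply mul_le_mul_of_nonneg_left hd (div_nonneg (by linarith) hηpos.le)
      _ ≤ Lr * dist x y := mul_le_mul_of_nonneg_right (le_max_right _ _) dist_nonneg

/-- Rademacher's theorem for locally Lipschitz functions. -/
lemma loclip_ae_differentiableAt {N : ℕ} {f : Euc N → ℝ} (hf : LocallyLipschitz f) :
    ∀ᵐ x : Euc N ∂volume, DifferentiableAt ℝ f x := by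
  have key : ∀ n : ℕ, ∀ᵐ x : Euc N ∂volume, x ∈ ball (0 : Euc N) n → DifferentiableAt ℝ f x := by
    intro n
    obtain ⟨L, hL⟩ := loclip_lipschitzOnWith hf (isCompact_closedBall (0 : Euc N) n)
    obtain ⟨g, hg, hfg⟩ := hL.extend_real
    filter_upwards [hg.ae_differentiableAt] with x hx hxn
    have hev : f =ᶠ[nhds x] g := by
      filter_upwards [isOpen_ball.mem_nhds hxn] with y hy
      exact hfg (ball_subset_closedBall hy)
    exact hev.differentiableAt_iff.2 hx
  filter_upwards [ae_all_iff.2 key] with x hx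
  obtain ⟨n, hn⟩ := exists_nat_gt ‖x‖
  exact hx n (mem_ball_zero_iff.2 hn)


/-- A.e. gradient bounds on a ball give oscillation control, via mollification. -/
lemma osc_bound {N : ℕ} {f : Euc N → ℝ} (hf : LocallyLipschitz f) {r T : ℝ}
    (hr : 0 ≤ r) (hT : 0 ≤ T)
    (hbd : ∀ᵐ z : Euc N ∂volume, ‖z‖ < T + 3 → ‖fderiv ℝ f z‖ ≤ r) :
    ∀ x ∈ closedBall (0 : Euc N) T, ∀ y ∈ closedBall (0 : Euc N) T,
      f y - f x ≤ r * ‖y - x‖ := by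
  obtain ⟨L0, hL0⟩ := loclip_lipschitzOnWith hf (isCompact_closedBall (0 : Euc N) (T + 3))
  set L : ℝ := (L0 : ℝ) with hLdef
  have hLnn : 0 ≤ L := L0.coe_nonneg
  have hdiff := loclip_ae_differentiableAt hf
  have hfc : Continuous f := hf.continuous
  have key : ∀ δ : ℝ, 0 < δ → δ ≤ 1 → ∀ x ∈ closedBall (0 : Euc N) T,
      ∀ y ∈ closedBall (0 : Euc N) T, f y - f x ≤ r * ‖y - x‖ + 2 * (L * δ) := by
    intro δ hδ hδ1 x hx y hy
    set c : ContDiffBump (0 : Euc N) := ⟨δ / 2, δ, by positivity, by linarith⟩ with hc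
    set φ : Euc N → ℝ := c.normed volume with hφ
    have hφc : Continuous φ := c.continuous_normed
    have hφnn : ∀ y, 0 ≤ φ y := fun y => c.nonneg_normed y
    have hφsupp : ∀ y : Euc N, φ y ≠ 0 → ‖y‖ < δ := by
      intro y hy0
      have : y ∈ Function.support φ := hy0
      rw [c.support_normed_eq] at this
      exact mem_ball_zero_iff.1 this
    have hφint : Integrable φ volume := c.integrable_normed
    have hφ1 : (∫ y, φ y) = 1 := c.integral_normed
    have hCS : HasCompactSupport φ := c.hasCompactSupport_normed
    have hInt : ∀ x : Euc N, Integrable (fun y => φ y * f (x - y)) volume := by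
      intro x
      exact (hφc.mul (hfc.comp (continuous_const.sub continuous_id))).integrable_of_hasCompactSupport
        hCS.mul_right
    set G : Euc N → ℝ := fun x => ∫ y, φ y * f (x - y) with hG
    set D : Euc N → Euc N →L[ℝ] ℝ := fun z => ∫ y, φ y • fderiv ℝ f (z - y) with hD
    have hGkey : ∀ x₀ ∈ ball (0 : Euc N) (T + 1),
        HasFDerivAt G (D x₀) x₀ ∧ ‖D x₀‖ ≤ r := by
      intro x₀ hx₀
      have hx₀n : ‖x₀‖ < T + 1 := mem_ball_zero_iff.1 hx₀
      have hmp := (Measure.measurePreserving_sub_left (volume : Measure (Euc N)) x₀)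
      have hae1 : ∀ᵐ y : Euc N ∂volume, DifferentiableAt ℝ f (x₀ - y) :=
        hmp.quasiMeasurePreserving.ae hdiff
      have hae2 : ∀ᵐ y : Euc N ∂volume, (‖x₀ - y‖ < T + 3 → ‖fderiv ℝ f (x₀ - y)‖ ≤ r) :=
        hmp.quasiMeasurePreserving.ae hbd
      have hDer := hasFDerivAt_integral_of_dominated_loc_of_lip
        (μ := (volume : Measure (Euc N)))
        (F := fun (x : Euc N) (y : Euc N) => φ y * f (x - y))
        (F' := fun y => φ y • fderiv ℝ f (x₀ - y)) (x₀ := x₀)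
        (bound := fun y => φ y * L) (s := ball x₀ 1) (ball_mem_nhds x₀ one_pos)
        (Filter.Eventually.of_forall fun x =>
          ((hφc.mul (hfc.comp (continuous_const.sub continuous_id))).aestronglyMeasurable))
        (hInt x₀)
        (by
          have m1 : Measurable fun y : Euc N => fderiv ℝ f (x₀ - y) :=
            (measurable_fderiv ℝ f).comp (measurable_const.sub measurable_id)
          exact hφc.aestronglyMeasurable.smul m1.aestronglyMeasurable)
        (by
          refine Filter.Eventually.of_forall fun y => ?_
          by_cases hy0 : φ y = 0
          · have heq : (fun x : Euc N => φ y * f (x - y)) = fun _ => (0 : ℝ) := by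
              funext u; simp [hy0]
            rw [heq]
            exact (((LipschitzWith.const (0 : ℝ)).weaken zero_le).lipschitzOnWith
              (s := ball x₀ 1))
          · have hyδ : ‖y‖ < δ := hφsupp y hy0
            rw [lipschitzOnWith_iff_dist_le_mul]
            intro x1 hx1 x2 hx2
            have hmem : ∀ u ∈ ball x₀ 1, u - y ∈ closedBall (0 : Euc N) (T + 3) := by
              intro u hu
              rw [mem_closedBall_zero_iff]
              have hu' : ‖u - x₀‖ < 1 := by
                rw [← dist_eq_norm]; exact mem_ball.1 hu
              calc ‖u - y‖ = ‖(u - x₀) + (x₀ - y)‖ := by rw [sub_add_sub_cancel]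
                _ ≤ ‖u - x₀‖ + ‖x₀ - y‖ := norm_add_le _ _
                _ ≤ ‖u - x₀‖ + (‖x₀‖ + ‖y‖) := by
                    gcongr
                    exact norm_sub_le _ _
                _ ≤ T + 3 := by linarith
            rw [Real.coe_nnabs, abs_of_nonneg (mul_nonneg (hφnn y) hLnn)]
            calc dist (φ y * f (x1 - y)) (φ y * f (x2 - y))
                = φ y * dist (f (x1 - y)) (f (x2 - y)) := by
                  rw [Real.dist_eq, Real.dist_eq, ← mul_sub, abs_mul, abs_of_nonneg (hφnn y)]
              _ ≤ φ y * (L * dist (x1 - y) (x2 - y)) := by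
                  apply mul_le_mul_of_nonneg_left _ (hφnn y)
                  exact hL0.dist_le_mul _ (hmem x1 hx1) _ (hmem x2 hx2)
              _ = (φ y * L) * dist x1 x2 := by
                  rw [dist_sub_right]; ring)
        (hφint.mul_const L)
        (by
          filter_upwards [hae1] with y hy
          have h1 : HasFDerivAt (fun x : Euc N => x - y)
              (ContinuousLinearMap.id ℝ (Euc N)) x₀ := (hasFDerivAt_id x₀).sub_const y
          have h3 := (hy.hasFDerivAt.comp x₀ h1).const_mul (φ y)
          simpa using h3)
      refine ⟨hDer.2, ?_⟩
      have hptw : ∀ᵐ y : Euc N ∂volume, ‖φ y • fderiv ℝ f (x₀ - y)‖ ≤ φ y * r := by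
        filter_upwards [hae2] with y hy
        by_cases hy0 : φ y = 0
        · simp [hy0]
        · have hyδ : ‖y‖ < δ := hφsupp y hy0
          have hpos : ‖x₀ - y‖ < T + 3 := by
            calc ‖x₀ - y‖ ≤ ‖x₀‖ + ‖y‖ := norm_sub_le _ _
              _ < T + 3 := by linarith
          rw [norm_smul, Real.norm_eq_abs, abs_of_nonneg (hφnn y)]
          exact mul_le_mul_of_nonneg_left (hy hpos) (hφnn y)
      calc ‖D x₀‖ ≤ ∫ y, φ y * r := norm_integral_le_of_norm_le (hφint.mul_const r) hptw
        _ = r := by rw [integral_mul_const, hφ1, one_mul]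
    have hsub : closedBall (0 : Euc N) T ⊆ ball (0 : Euc N) (T + 1) :=
      closedBall_subset_ball (by linarith)
    have hMVT : ‖G y - G x‖ ≤ r * ‖y - x‖ :=
      Convex.norm_image_sub_le_of_norm_hasFDerivWithin_le
        (fun z hz => ((hGkey z hz).1).hasFDerivWithinAt) (fun z hz => (hGkey z hz).2)
        (convex_ball _ _) (hsub hx) (hsub hy)
    have happrox : ∀ z ∈ closedBall (0 : Euc N) T, |G z - f z| ≤ L * δ := by
      intro z hz
      have hzn : ‖z‖ ≤ T := mem_closedBall_zero_iff.1 hz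
      have hconst : (∫ y : Euc N, φ y * f z) = f z := by
        rw [integral_mul_const, hφ1, one_mul]
      have hGz : G z = ∫ y, φ y * f (z - y) := rfl
      have h1 : (∫ y, φ y * (f (z - y) - f z))
          = (∫ y, φ y * f (z - y)) - ∫ y, φ y * f z := by
        rw [← integral_sub (hInt z) (hφint.mul_const (f z))]
        congr 1; funext u; ring
      have hsub2 : G z - f z = ∫ y, φ y * (f (z - y) - f z) := by
        rw [h1, hconst, hGz]
      rw [hsub2]
      have hbnd : ∀ y : Euc N, ‖φ y * (f (z - y) - f z)‖ ≤ φ y * (L * δ) := by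
        intro u
        by_cases hu0 : φ u = 0
        · simp [hu0, mul_nonneg hLnn hδ.le]
        · have huδ : ‖u‖ < δ := hφsupp u hu0
          have hm1 : z - u ∈ closedBall (0 : Euc N) (T + 3) := by
            rw [mem_closedBall_zero_iff]
            calc ‖z - u‖ ≤ ‖z‖ + ‖u‖ := norm_sub_le _ _
              _ ≤ T + 3 := by linarith
          have hm2 : z ∈ closedBall (0 : Euc N) (T + 3) := by
            rw [mem_closedBall_zero_iff]; linarith
          have hdist : dist (f (z - u)) (f z) ≤ L * ‖u‖ := by
            have := hL0.dist_le_mul _ hm1 _ hm2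
            calc dist (f (z - u)) (f z) ≤ L * dist (z - u) z := this
              _ = L * ‖u‖ := by
                  rw [dist_eq_norm]
                  congr 1
                  rw [sub_sub_cancel_left, norm_neg]
          rw [Real.norm_eq_abs, abs_mul, abs_of_nonneg (hφnn u)]
          apply mul_le_mul_of_nonneg_left _ (hφnn u)
          rw [← Real.dist_eq]
          calc dist (f (z - u)) (f z) ≤ L * ‖u‖ := hdist
            _ ≤ L * δ := by nlinarith
      have := norm_integral_le_of_norm_le (hφint.mul_const (L * δ))
        (Filter.Eventually.of_forall hbnd)
      rw [Real.norm_eq_abs] at this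
      calc |∫ y, φ y * (f (z - y) - f z)| ≤ ∫ y, φ y * (L * δ) := this
        _ = L * δ := by rw [integral_mul_const, hφ1, one_mul]
    have hA := happrox y hy
    have hB := happrox x hx
    have hC : |G y - G x| ≤ r * ‖y - x‖ := by rw [← Real.norm_eq_abs]; exact hMVT
    have := abs_le.1 hA
    have := abs_le.1 hB
    have := abs_le.1 hC
    linarith [this.1, this.2]
  intro x hx y hy
  refine le_of_forall_pos_le_add fun ε hε => ?_
  have h2L : (0:ℝ) < 2 * L + 1 := by linarith
  set δ : ℝ := min 1 (ε / (2 * L + 1)) with hδdef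
  have hδpos : 0 < δ := lt_min one_pos (by positivity)
  have hδ1 : δ ≤ 1 := min_le_left _ _
  have hδ2 : δ ≤ ε / (2 * L + 1) := min_le_right _ _
  have := key δ hδpos hδ1 x hx y hy
  have h3 : 2 * (L * δ) ≤ ε := by
    have : δ * (2 * L + 1) ≤ ε := by
      rw [← div_mul_cancel₀ ε (ne_of_gt h2L)]
      exact mul_le_mul_of_nonneg_right hδ2 h2L.le
    nlinarith
  linarith


lemma norm_gradient_eq {N : ℕ} (f : Euc N → ℝ) (x : Euc N) :
    ‖gradient f x‖ = ‖fderiv ℝ f x‖ := by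
  rw [gradient]; exact LinearIsometryEquiv.norm_map _ _

lemma m_lt_of_subsol {N : ℕ} {H : Euc N × Euc N → ℝ} (hA1 : Continuous H)
    {m : ℝ} {x₀ : Euc N} (hx₀ : ∀ p : Euc N, m < H (x₀, p))
    {a : ℝ} {u : Euc N → ℝ} (hu : IsSubsol H a u) : m < a := by
  obtain ⟨hLip, hae⟩ := hu
  by_contra hma
  push_neg at hma
  obtain ⟨K₀, t, ht, hlip⟩ := hLip x₀
  obtain ⟨ρ, hρpos, hρ⟩ := Metric.mem_nhds_iff.1 ht
  set T : Set (Euc N × Euc N) :=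
    (closedBall x₀ ρ ×ˢ closedBall (0 : Euc N) K₀) ∩ {z | H z ≤ a} with hT
  have hTc : IsCompact T := by
    apply IsCompact.of_isClosed_subset
      ((isCompact_closedBall x₀ ρ).prod (isCompact_closedBall (0 : Euc N) K₀))
    · exact (IsClosed.prod isClosed_closedBall isClosed_closedBall).inter (isClosed_Iic.preimage hA1)
    · exact Set.inter_subset_left
  have hPc : IsCompact (Prod.fst '' T) := hTc.image continuous_fst
  have hx₀P : x₀ ∈ (Prod.fst '' T)ᶜ := by
    rintro ⟨z, ⟨⟨_, hz2⟩, hzH⟩, hz1⟩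
    have : m < H (x₀, z.2) := hx₀ z.2
    have h2 : H (x₀, z.2) ≤ a := by
      have : H z ≤ a := hzH
      rwa [show z = (z.1, z.2) from rfl, hz1] at this
    linarith
  obtain ⟨δ, hδpos, hδ⟩ := Metric.mem_nhds_iff.1 (hPc.isClosed.isOpen_compl.mem_nhds hx₀P)
  set δ' : ℝ := min δ ρ with hδ'
  have hδ'pos : 0 < δ' := lt_min hδpos hρpos
  set S : Set (Euc N) := {x | DifferentiableAt ℝ u x ∧ H (x, gradient u x) ≤ a} with hS
  have hfull : ∀ᵐ x : Euc N ∂volume, x ∈ S := by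
    filter_upwards [loclip_ae_differentiableAt hLip, hae] with x h1 h2
    exact ⟨h1, h2 h1⟩
  have hball : 0 < volume (ball x₀ δ') := measure_ball_pos _ _ hδ'pos
  have hne : (ball x₀ δ' ∩ S).Nonempty := by
    by_contra hcon
    rw [Set.not_nonempty_iff_eq_empty] at hcon
    have hsub : ball x₀ δ' ⊆ Sᶜ := by
      intro x hx hxS
      have : x ∈ ball x₀ δ' ∩ S := ⟨hx, hxS⟩
      rw [hcon] at this
      exact this
    have : volume (ball x₀ δ') = 0 :=
      measure_mono_null hsub (ae_iff.1 hfull)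
    exact hball.ne' this
  obtain ⟨x, hxball, hxdiff, hxH⟩ := hne
  have hxρ : x ∈ ball x₀ ρ := by
    apply ball_subset_ball (min_le_right δ ρ) hxball
  have hfd : ‖fderiv ℝ u x‖ ≤ K₀ :=
    (hxdiff.hasFDerivAt).le_of_lipschitzOn (isOpen_ball.mem_nhds hxρ) (hlip.mono hρ)
  have hgrad : ‖gradient u x‖ ≤ K₀ := by rw [norm_gradient_eq]; exact hfd
  have hxT : (x, gradient u x) ∈ T :=
    ⟨⟨ball_subset_closedBall hxρ, mem_closedBall_zero_iff.2 hgrad⟩, hxH⟩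
  exact hδ (ball_subset_ball (min_le_left δ ρ) hxball) ⟨(x, gradient u x), hxT, rfl⟩


lemma loclip_sub_const {N : ℕ} {f : Euc N → ℝ} (hf : LocallyLipschitz f) (c : ℝ) :
    LocallyLipschitz (fun x => f x - c) := by
  intro x
  obtain ⟨K, t, ht, hl⟩ := hf x
  refine ⟨K, t, ht, fun y hy z hz => ?_⟩
  have : edist (f y - c) (f z - c) = edist (f y) (f z) := edist_sub_right _ _ _
  rw [this]
  exact hl hy hz


set_option maxHeartbeats 2000000 in
theorem stmt3 {N : ℕ} (hN : 1 ≤ N) (H : Euc N × Euc N → ℝ)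
    (hA1 : Continuous H)
    (hA2conv : ∀ x : Euc N, ConvexOn ℝ Set.univ fun p => H (x, p))
    (hA2coer : ∀ R : ℝ, 0 < R → ∀ C : ℝ, ∃ r : ℝ, ∀ x p : Euc N,
      ‖x‖ ≤ R → r ≤ ‖p‖ → C ≤ H (x, p))
    (hA3 : ∃ ε > (0 : ℝ), ∃ m : ℝ,
      (∃ R : ℝ, ∀ x : Euc N, R ≤ ‖x‖ → ∀ p : Euc N, ‖p‖ ≤ ε → H (x, p) ≤ m) ∧
      (∃ x₀ : Euc N, ∀ p : Euc N, m < H (x₀, p)))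
    (hcrit : sInf {a : ℝ | ∃ u : Euc N → ℝ, IsSubsol H a u} = 0)
    (um : ℝ → Euc N → ℝ)
    (hum : ∀ lam : ℝ, 0 < lam → ∀ x : Euc N,
      um lam x = sSup {r : ℝ | ∃ v : Euc N → ℝ, IsDiscSubsol H lam v ∧ v x = r})
 :
    ∃ C : ℝ, 0 < C ∧ ∀ lam : ℝ, 0 < lam → ∀ x : Euc N, -C ≤ um lam x := by
  classical
  obtain ⟨ε, hε, m, ⟨R, hR⟩, ⟨x₀, hx₀⟩⟩ := hA3
  set R₀ : ℝ := max R 0 with hR₀def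
  have hR₀nn : 0 ≤ R₀ := le_max_right _ _
  have hRR₀ : R ≤ R₀ := le_max_left _ _
  have hOut : ∀ x : Euc N, R₀ ≤ ‖x‖ → ∀ p : Euc N, ‖p‖ ≤ ε → H (x, p) ≤ m :=
    fun x hx p hp => hR x (le_trans hRR₀ hx) p hp
  set A : Set ℝ := {a : ℝ | ∃ u : Euc N → ℝ, IsSubsol H a u} with hA
  -- A is nonempty via the constant function 0
  have hM0 : ∃ M₀ : ℝ, ∀ x : Euc N, H (x, 0) ≤ M₀ := by
    have hcont : Continuous (fun x : Euc N => H (x, 0)) :=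
      hA1.comp (continuous_id.prodMk continuous_const)
    obtain ⟨B, hB⟩ := (isCompact_closedBall (0 : Euc N) R₀).exists_bound_of_continuousOn
      hcont.continuousOn
    refine ⟨max B m, fun x => ?_⟩
    by_cases hx : ‖x‖ ≤ R₀
    · have h1 := hB x (mem_closedBall_zero_iff.2 hx)
      rw [Real.norm_eq_abs] at h1
      exact le_trans (le_trans (le_abs_self _) h1) (le_max_left _ _)
    · push_neg at hx
      exact le_trans (hOut x hx.le 0 (by simp [hε.le])) (le_max_right _ _)
  obtain ⟨M₀, hM₀⟩ := hM0
  have hAne : A.Nonempty := by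
    refine ⟨M₀, (fun _ => (0 : ℝ)), LocallyLipschitz.const 0, ?_⟩
    refine Filter.Eventually.of_forall fun x _ => ?_
    rw [gradient_fun_const x (0:ℝ)]
    exact hM₀ x
  have hmlt : ∀ a ∈ A, m < a := by
    rintro a ⟨u, hu⟩
    exact m_lt_of_subsol hA1 hx₀ hu
  have hm0 : m ≤ 0 := by
    have := le_csInf hAne (fun b hb => (hmlt b hb).le)
    rwa [hcrit] at this
  have hR₃pos : (0 : ℝ) < R₀ + 3 := by linarith
  obtain ⟨r₀, hr₀⟩ := hA2coer (R₀ + 3) hR₃pos 2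
  set r : ℝ := max r₀ 0 with hrdef
  have hrnn : 0 ≤ r := le_max_right _ _
  set C : ℝ := 2 * r * R₀ + ε * R₀ + 3 with hCdef
  have hCpos : 0 < C := by
    nlinarith [mul_nonneg (mul_nonneg (by norm_num : (0:ℝ) ≤ 2) hrnn) hR₀nn,
      mul_nonneg hε.le hR₀nn]
  have hC3 : 3 ≤ C := by
    nlinarith [mul_nonneg (mul_nonneg (by norm_num : (0:ℝ) ≤ 2) hrnn) hR₀nn,
      mul_nonneg hε.le hR₀nn]
  refine ⟨C, hCpos, ?_⟩
  intro lam hlam x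
  rw [hum lam hlam x]
  set SS : Set ℝ := {s : ℝ | ∃ v : Euc N → ℝ, IsDiscSubsol H lam v ∧ v x = s} with hSS
  by_cases hbdd : BddAbove SS
  swap
  · rw [Real.sSup_of_not_bddAbove hbdd]; linarith
  -- pick a subsolution with level below min lam 1
  have hlt : sInf A < min lam 1 := by rw [hcrit]; exact lt_min hlam one_pos
  obtain ⟨a, haA, halt⟩ := exists_lt_of_csInf_lt hAne hlt
  obtain ⟨w, hwLip, hwae⟩ := haA
  have hma : m < a := hmlt a ⟨w, hwLip, hwae⟩
  have ha1 : a < 1 := lt_of_lt_of_le halt (min_le_right _ _)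
  have halam : a ≤ lam := le_of_lt (lt_of_lt_of_le halt (min_le_left _ _))
  have hwdiff := loclip_ae_differentiableAt hwLip
  have hwcont : Continuous w := hwLip.continuous
  -- a.e. gradient bound for w on the ball of radius R₀ + 3
  have hgradbd : ∀ᵐ z : Euc N ∂volume, ‖z‖ < R₀ + 3 → ‖fderiv ℝ w z‖ ≤ r := by
    filter_upwards [hwae] with z hz hznorm
    by_cases hdz : DifferentiableAt ℝ w z
    · have hHz := hz hdz
      have hlt' : ‖gradient w z‖ < r₀ := by
        by_contra hge
        push_neg at hge
        have := hr₀ z (gradient w z) hznorm.le hge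
        linarith
      rw [← norm_gradient_eq]
      exact le_trans hlt'.le (le_max_left _ _)
    · rw [fderiv_zero_of_not_differentiableAt hdz]
      simpa using hrnn
  have hosc := osc_bound hwLip hrnn hR₀nn hgradbd
  have h0mem : (0 : Euc N) ∈ closedBall (0 : Euc N) R₀ := mem_closedBall_self hR₀nn
  have hup : ∀ z ∈ closedBall (0 : Euc N) R₀, w z ≤ w 0 + r * R₀ := by
    intro z hz
    have h1 := hosc 0 h0mem z hz
    have hzb : ‖z - 0‖ ≤ R₀ := by
      rw [sub_zero]; exact mem_closedBall_zero_iff.1 hz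
    nlinarith [mul_le_mul_of_nonneg_left hzb hrnn]
  have hdown : ∀ z ∈ closedBall (0 : Euc N) R₀, w 0 - r * R₀ ≤ w z := by
    intro z hz
    have h1 := hosc z hz 0 h0mem
    have hzb : ‖(0 : Euc N) - z‖ ≤ R₀ := by
      rw [zero_sub, norm_neg]; exact mem_closedBall_zero_iff.1 hz
    nlinarith [mul_le_mul_of_nonneg_left hzb hrnn]
  -- the cone function
  set A₁ : ℝ := w 0 + r * R₀ + 1 with hA₁
  set φc : Euc N → ℝ := fun z => A₁ + ε * R₀ - ε * ‖z‖ with hφc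
  have hφlip : LipschitzWith (Real.toNNReal ε) φc := by
    apply LipschitzWith.of_dist_le_mul
    intro p q
    rw [Real.coe_toNNReal _ hε.le, Real.dist_eq]
    have : φc p - φc q = ε * (‖q‖ - ‖p‖) := by rw [hφc]; ring
    rw [this, abs_mul, abs_of_nonneg hε.le]
    apply mul_le_mul_of_nonneg_left _ hε.le
    rw [abs_sub_comm, dist_eq_norm]
    exact abs_norm_sub_norm_le _ _
  have hφconeLip : LocallyLipschitz φc := hφlip.locallyLipschitz
  have hφcont : Continuous φc := hφconeLip.continuous
  have hφgt : ∀ z ∈ closedBall (0 : Euc N) R₀, w z < φc z := by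
    intro z hz
    have h1 := hup z hz
    have h2 : ε * ‖z‖ ≤ ε * R₀ :=
      mul_le_mul_of_nonneg_left (mem_closedBall_zero_iff.1 hz) hε.le
    have : φc z = A₁ + ε * R₀ - ε * ‖z‖ := rfl
    rw [this, hA₁]
    linarith
  have hφfd : ∀ z : Euc N, ‖fderiv ℝ φc z‖ ≤ ε := by
    intro z
    by_cases hdz : DifferentiableAt ℝ φc z
    · have := hdz.hasFDerivAt.le_of_lipschitz hφlip
      rwa [Real.coe_toNNReal _ hε.le] at this
    · rw [fderiv_zero_of_not_differentiableAt hdz]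
      simpa using hε.le
  -- the truncated subsolution
  set wt : Euc N → ℝ := fun z => min (w z) (φc z) with hwt
  have hwtLip : LocallyLipschitz wt := hwLip.min hφconeLip
  have hwtae : ∀ᵐ z : Euc N ∂volume,
      DifferentiableAt ℝ wt z → H (z, gradient wt z) ≤ a := by
    filter_upwards [hwae, hwdiff] with z hz1 hz2
    intro hdwt
    rcases le_or_gt (w z) (φc z) with hc | hc
    · have hdw : DifferentiableAt ℝ w z := hz2
      have hfd_eq : fderiv ℝ wt z = fderiv ℝ w z := by
        have hg : ∀ y, 0 ≤ w y - wt y := fun y => sub_nonneg.2 (min_le_left _ _)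
        have hgz : w z - wt z = 0 := by
          have : wt z = w z := min_eq_left hc
          rw [this, sub_self]
        have hmin : IsLocalMin (fun y => w y - wt y) z := by
          have : ∀ᶠ y in nhds z, (fun y => w y - wt y) z ≤ w y - wt y :=
            Filter.Eventually.of_forall fun y => by
              simp only [hgz]
              exact hg y
          exact this
        have h0 := hmin.fderiv_eq_zero
        have hsub : fderiv ℝ (fun y => w y - wt y) z = fderiv ℝ w z - fderiv ℝ wt z :=
          fderiv_sub hdw hdwt
        have := hsub.symm.trans h0
        have := sub_eq_zero.1 this
        exact this.symm
      have hgrad_eq : gradient wt z = gradient w z := by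
        rw [gradient, gradient, hfd_eq]
      rw [hgrad_eq]
      exact hz1 hdw
    · have hpos : R₀ < ‖z‖ := by
        by_contra hle
        push_neg at hle
        have := hφgt z (mem_closedBall_zero_iff.2 hle)
        linarith
      have hev : wt =ᶠ[nhds z] φc := by
        have hopen : IsOpen {y : Euc N | φc y < w y} := isOpen_lt hφcont hwcont
        filter_upwards [hopen.mem_nhds hc] with y hy
        exact min_eq_right (le_of_lt hy)
      have hfd_eq : fderiv ℝ wt z = fderiv ℝ φc z := hev.fderiv_eq
      have hgnorm : ‖gradient wt z‖ ≤ ε := by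
        rw [norm_gradient_eq, hfd_eq]
        exact hφfd z
      calc H (z, gradient wt z) ≤ m := hOut z hpos.le _ hgnorm
        _ ≤ a := hma.le
  -- the shifted function v₁
  set c₁ : ℝ := A₁ + ε * R₀ + 1 with hc₁
  set v₁ : Euc N → ℝ := fun z => wt z - c₁ with hv₁
  have hv₁Lip : LocallyLipschitz v₁ := loclip_sub_const hwtLip c₁
  have hv₁cont : Continuous v₁ := hv₁Lip.continuous
  have hv₁le : ∀ z, v₁ z ≤ -1 := by
    intro z
    have h1 : wt z ≤ φc z := min_le_right _ _
    have h2 : φc z ≤ A₁ + ε * R₀ := by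
      have : φc z = A₁ + ε * R₀ - ε * ‖z‖ := rfl
      rw [this]
      nlinarith [mul_nonneg hε.le (norm_nonneg z)]
    have : v₁ z = wt z - c₁ := rfl
    rw [this, hc₁]
    linarith
  have hv₁ball : ∀ z ∈ closedBall (0 : Euc N) R₀, -(C - 1) ≤ v₁ z := by
    intro z hz
    have h1 := hdown z hz
    have h2 : wt z = w z := min_eq_left (hφgt z hz).le
    have h3 : v₁ z = w z - c₁ := by rw [hv₁]; simp only [h2]
    rw [h3, hc₁, hA₁, hCdef]
    linarith
  have hv₁ae : ∀ᵐ z : Euc N ∂volume, DifferentiableAt ℝ v₁ z →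
      lam * v₁ z + H (z, gradient v₁ z) ≤ 0 := by
    filter_upwards [hwtae] with z hz hdv₁
    have hdwt : DifferentiableAt ℝ wt z := by
      have heq : (fun y => v₁ y + c₁) = wt := by
        funext y
        simp [hv₁]
      rw [← heq]
      exact hdv₁.add_const c₁
    have hfdeq : fderiv ℝ v₁ z = fderiv ℝ wt z := by
      rw [hv₁]
      exact fderiv_sub_const c₁
    have hgr : gradient v₁ z = gradient wt z := by
      rw [gradient, gradient, hfdeq]
    have hH := hz hdwt
    rw [hgr]
    have hlamv : lam * v₁ z ≤ -a := by
      calc lam * v₁ z ≤ lam * (-1) :=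
            mul_le_mul_of_nonneg_left (hv₁le z) hlam.le
        _ = -lam := by ring
        _ ≤ -a := by linarith
    linarith
  -- the final discounted subsolution
  set v : Euc N → ℝ := fun z => max (v₁ z) (-C) with hv
  have hvLip : LocallyLipschitz v := hv₁Lip.max_const (-C)
  have hvae : ∀ᵐ z : Euc N ∂volume, DifferentiableAt ℝ v z →
      lam * v z + H (z, gradient v z) ≤ 0 := by
    filter_upwards [hv₁ae, loclip_ae_differentiableAt hv₁Lip] with z hz1 hz2
    intro hdv
    rcases lt_trichotomy (v₁ z) (-C) with hcmp | hcmp | hcmp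
    · have hpos : R₀ < ‖z‖ := by
        by_contra hle
        push_neg at hle
        have := hv₁ball z (mem_closedBall_zero_iff.2 hle)
        linarith
      have hev : v =ᶠ[nhds z] (fun _ => -C) := by
        have hopen : IsOpen {y : Euc N | v₁ y < -C} := isOpen_lt hv₁cont continuous_const
        filter_upwards [hopen.mem_nhds hcmp] with y hy
        exact max_eq_right (le_of_lt hy)
      have hveq : v z = -C := max_eq_right hcmp.le
      have hfd : fderiv ℝ v z = 0 := by
        rw [hev.fderiv_eq]
        exact fderiv_const_apply (-C)
      have hgrad0 : gradient v z = (0 : Euc N) := by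
        rw [gradient, hfd]
        exact map_zero _
      rw [hveq, hgrad0]
      have hHz : H (z, 0) ≤ m := hOut z hpos.le 0 (by simp [hε.le])
      nlinarith [mul_pos hlam hCpos]
    · have hveq : v z = v₁ z := by
        have : v z = max (v₁ z) (-C) := rfl
        rw [this, hcmp, max_self]
      have hfd_eq : fderiv ℝ v z = fderiv ℝ v₁ z := by
        have hg : ∀ y, 0 ≤ v y - v₁ y := fun y => sub_nonneg.2 (le_max_left _ _)
        have hgz : v z - v₁ z = 0 := by rw [hveq, sub_self]
        have hmin : IsLocalMin (fun y => v y - v₁ y) z := by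
          have : ∀ᶠ y in nhds z, (fun y => v y - v₁ y) z ≤ v y - v₁ y :=
            Filter.Eventually.of_forall fun y => by
              simp only [hgz]
              exact hg y
          exact this
        have h0 := hmin.fderiv_eq_zero
        have hsub : fderiv ℝ (fun y => v y - v₁ y) z = fderiv ℝ v z - fderiv ℝ v₁ z :=
          fderiv_sub hdv hz2
        have := hsub.symm.trans h0
        exact sub_eq_zero.1 this
      have hgr : gradient v z = gradient v₁ z := by
        rw [gradient, gradient, hfd_eq]
      rw [hveq, hgr]
      exact hz1 hz2
    · have hev : v =ᶠ[nhds z] v₁ := by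
        have hopen : IsOpen {y : Euc N | -C < v₁ y} := isOpen_lt continuous_const hv₁cont
        filter_upwards [hopen.mem_nhds hcmp] with y hy
        exact max_eq_left (le_of_lt hy)
      have hveq : v z = v₁ z := max_eq_left hcmp.le
      have hgr : gradient v z = gradient v₁ z := by
        rw [gradient, gradient, hev.fderiv_eq]
      rw [hveq, hgr]
      exact hz1 hz2
  have hvsub : IsDiscSubsol H lam v := ⟨hvLip, hvae⟩
  have hvx : v x ∈ SS := ⟨v, hvsub, rfl⟩
  have hvC : -C ≤ v x := le_max_right _ _
  exact le_trans hvC (le_csSup hbdd hvx)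


end
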